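/- Let n be a positive integer and let b, d be real numbers with b < 1 - n and d < b + 1 - n, and assume d is not a nonpositive integer. Then the polynomial ₂F₁(-n, b; d; z) has exactly n zeros, all of which are real and simple and lie in the open interval (1, ∞). -/

import Mathlib

open Polynomial Filter Set Topology


/-- The Pochhammer symbol `(x)_k = x (x+1) ⋯ (x+k-1)` for a real number `x`. -/
noncomputable def poch (x : ℝ) (k : ℕ) : ℝ := ∏ i ∈ Finset.range k, (x + i)

/-- The terminating Gauss hypergeometric polynomial `₂F₁(-n, b; d; z)`
    as a real polynomial in `z`. -/
noncomputable def hypPoly (n : ℕ) (b d : ℝ) : Polynomial ℝ :=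
  ∑ k ∈ Finset.range (n + 1),
    Polynomial.C ((poch (-(n : ℝ)) k * poch b k) / (poch d k * (Nat.factorial k))) *
      Polynomial.X ^ k

lemma poch_zero (x : ℝ) : poch x 0 = 1 := by simp [poch]

lemma poch_succ (x : ℝ) (k : ℕ) : poch x (k+1) = poch x k * (x + k) := by
  simp [poch, Finset.prod_range_succ]

lemma poch_succ' (x : ℝ) (k : ℕ) : poch x (k+1) = x * poch (x+1) k := by
  rw [poch, Finset.prod_range_succ']
  simp only [Nat.cast_zero, add_zero, poch]
  rw [mul_comm]
  congr 1
  apply Finset.prod_congr rfl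
  intro i _
  push_cast
  ring

lemma poch_ne_zero {x : ℝ} {k : ℕ} (h : ∀ i : ℕ, i < k → x + i ≠ 0) : poch x k ≠ 0 := by
  rw [poch]
  exact Finset.prod_ne_zero_iff.2 (fun i hi => h i (Finset.mem_range.1 hi))

lemma poch_neg_nat_eq_zero {k m : ℕ} (h : k < m) : poch (-(k:ℝ)) m = 0 := by
  rw [poch]
  apply Finset.prod_eq_zero (Finset.mem_range.2 h)
  simp

lemma hypPoly_coeff (k : ℕ) (β γ : ℝ) (m : ℕ) :
    (hypPoly k β γ).coeff m
      = poch (-(k:ℝ)) m * poch β m / (poch γ m * (Nat.factorial m)) := by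
  rw [hypPoly, finset_sum_coeff]
  by_cases hm : m ≤ k
  · rw [Finset.sum_eq_single m]
    · simp
    · intro j _ hj
      simp only [coeff_C_mul, coeff_X_pow, if_neg (Ne.symm hj), mul_zero]
    · intro h
      exact absurd (Finset.mem_range.2 (Nat.lt_succ_of_le hm)) h
  · rw [Finset.sum_eq_zero, poch_neg_nat_eq_zero (Nat.lt_of_not_le hm), zero_mul, zero_div]
    intro j hj
    have : j ≠ m := by
      intro h; exact hm (h ▸ Nat.lt_succ_iff.1 (Finset.mem_range.1 hj))
    simp only [coeff_C_mul, coeff_X_pow, if_neg (Ne.symm this), mul_zero]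

lemma step_coeff (k m : ℕ) (β γ : ℝ) (hγ : ∀ i : ℕ, γ - 1 + i ≠ 0) :
    (γ-1) * (poch (-(k:ℝ)) (m+1) * poch β (m+1) / (poch γ (m+1) * (Nat.factorial (m+1)))
       - poch (-(k:ℝ)) m * poch β m / (poch γ m * (Nat.factorial m)))
    + (γ - β + k) * (poch (-(k:ℝ)) m * poch β m / (poch γ m * (Nat.factorial m)))
    + (((m:ℝ)+1) * (poch (-(k:ℝ)) (m+1) * poch β (m+1) / (poch γ (m+1) * (Nat.factorial (m+1))))
       - (m:ℝ) * (poch (-(k:ℝ)) m * poch β m / (poch γ m * (Nat.factorial m))))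
    = (γ-1) * (poch (-((k:ℝ)+1)) (m+1) * poch (β-1) (m+1) / (poch (γ-1) (m+1) * (Nat.factorial (m+1)))) := by
  have e1 : -((k:ℝ)+1) + 1 = -(k:ℝ) := by ring
  have e2 : (β - 1) + 1 = β := by ring
  have e3 : (γ - 1) + 1 = γ := by ring
  have hG : poch γ m ≠ 0 := poch_ne_zero (fun i _ => by
    have := hγ (i+1); push_cast at this; intro h; apply this; linarith)
  have hγm : γ + (m:ℝ) ≠ 0 := by
    have := hγ (m+1); push_cast at this; intro h; apply this; linarith
  have hγ1 : γ - 1 ≠ 0 := by simpa using hγ 0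
  have hfac : ((Nat.factorial m : ℝ)) ≠ 0 := Nat.cast_ne_zero.2 (Nat.factorial_ne_zero m)
  have hm1 : (m:ℝ) + 1 ≠ 0 := by positivity
  rw [poch_succ' (-((k:ℝ)+1)), e1, poch_succ' (β-1), e2, poch_succ' (γ-1), e3,
    poch_succ (-(k:ℝ)), poch_succ β, poch_succ γ, Nat.factorial_succ]
  push_cast
  field_simp
  ring

lemma step_eq (k : ℕ) (β γ : ℝ) (hγ : ∀ i : ℕ, γ - 1 + i ≠ 0) :
    C (γ-1) * ((1 - X) * hypPoly k β γ) + C (γ - β + (k:ℝ)) * (X * hypPoly k β γ)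
      + (X - X^2) * derivative (hypPoly k β γ)
    = C (γ-1) * hypPoly (k+1) (β-1) (γ-1) := by
  have expand : C (γ-1) * ((1 - X) * hypPoly k β γ) + C (γ - β + (k:ℝ)) * (X * hypPoly k β γ)
      + (X - X^2) * derivative (hypPoly k β γ)
      = (C (γ-1) * hypPoly k β γ - C (γ-1) * (X * hypPoly k β γ)) + C (γ - β + (k:ℝ)) * (X * hypPoly k β γ)
        + (X * derivative (hypPoly k β γ) - X * (X * derivative (hypPoly k β γ))) := by ring
  rw [expand]
  ext m
  have hcast : -((k:ℝ)+1) = -(((k+1:ℕ)):ℝ) := by push_cast; ring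
  match m with
  | 0 =>
    simp only [coeff_add, coeff_sub, coeff_C_mul, mul_coeff_zero, coeff_X_zero, zero_mul,
      hypPoly_coeff, poch_zero, Nat.factorial_zero]
    norm_num
  | 1 =>
    have h := step_coeff k 0 β γ hγ
    simp only [coeff_add, coeff_sub, coeff_C_mul, coeff_X_mul, mul_coeff_zero, coeff_X_zero,
      zero_mul, coeff_derivative, hypPoly_coeff, ← hcast]
    simp only [poch_zero, Nat.factorial_zero] at h ⊢
    push_cast at h ⊢
    linear_combination h
  | (m+2) =>
    have h := step_coeff k (m+1) β γ hγ
    simp only [coeff_add, coeff_sub, coeff_C_mul, coeff_X_mul, coeff_derivative,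
      hypPoly_coeff, ← hcast]
    push_cast at h ⊢
    linear_combination h

lemma hasDeriv_F (k : ℕ) (β γ : ℝ) (hγ : ∀ i : ℕ, γ - 1 + i ≠ 0)
    (e1 e2 s1 s2 : ℝ) (he1 : e1 = γ - 1) (he2 : e2 = γ - 2)
    (hs1 : s1 = β - γ - k) (hs2 : s2 = s1 - 1) {z : ℝ} (hz : 1 < z) :
    HasDerivAt (fun y => y ^ e1 * (y-1) ^ s1 * eval y (hypPoly k β γ))
      (-(γ-1) * (z ^ e2 * (z-1) ^ s2 * eval z (hypPoly (k+1) (β-1) (γ-1)))) z := by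
  have hz0 : (0:ℝ) < z := lt_trans one_pos hz
  have hz1 : (0:ℝ) < z - 1 := by linarith
  have h1 : HasDerivAt (fun y : ℝ => y ^ e1) (e1 * z ^ (e1-1)) z :=
    Real.hasDerivAt_rpow_const (Or.inl hz0.ne')
  have h2 : HasDerivAt (fun y : ℝ => (y-1) ^ s1) (s1 * (z-1) ^ (s1-1)) z := by
    have := ((hasDerivAt_id z).sub_const 1).rpow_const (p := s1) (Or.inl hz1.ne')
    simpa using this
  have h3 := (hypPoly k β γ).hasDerivAt z
  have H := (h1.mul h2).mul h3
  convert H using 1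
  · rfl
  · rfl
  · rfl
  have key := congrArg (eval z) (step_eq k β γ hγ)
  simp only [eval_add, eval_mul, eval_sub, eval_C, eval_X, eval_pow, eval_one] at key
  subst he1 he2 hs1 hs2
  have r1 : z ^ (γ - 1) = z ^ (γ-2) * z := by
    have h := Real.rpow_add hz0 (γ-2) 1
    rw [show γ-2+1 = γ-1 by ring, Real.rpow_one] at h
    exact h
  have r1' : z ^ (γ - 1 - 1) = z ^ (γ-2) := by
    rw [show γ-1-1 = γ-2 by ring]
  have r2 : (z-1) ^ (β - γ - (k:ℝ)) = (z-1) ^ (β - γ - (k:ℝ) - 1) * (z-1) := by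
    have h := Real.rpow_add hz1 (β - γ - (k:ℝ) - 1) 1
    rw [show β - γ - (k:ℝ)-1+1 = β - γ - (k:ℝ) by ring, Real.rpow_one] at h
    exact h
  simp only [Pi.mul_apply]
  rw [r1, r1', r2]
  linear_combination (z ^ (γ-2) * (z-1) ^ (β - γ - (k:ℝ) - 1)) * key

lemma tendsto_F_one (p : Polynomial ℝ) (e σ : ℝ) (hσ : 0 < σ) :
    Tendsto (fun z : ℝ => z ^ e * (z-1) ^ σ * eval z p) (𝓝[>] (1:ℝ)) (𝓝 0) := by
  have h1 : Tendsto (fun z : ℝ => z ^ e) (𝓝[>] (1:ℝ)) (𝓝 ((1:ℝ) ^ e)) :=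
    (Real.continuousAt_rpow_const 1 e (Or.inl one_ne_zero)).tendsto.mono_left nhdsWithin_le_nhds
  have hsub : Tendsto (fun z : ℝ => z - 1) (𝓝[>] (1:ℝ)) (𝓝 0) := by
    have : Tendsto (fun z : ℝ => z - 1) (𝓝 (1:ℝ)) (𝓝 ((1:ℝ) - 1)) :=
      (continuous_id.sub continuous_const).tendsto 1
    simpa using this.mono_left nhdsWithin_le_nhds
  have h2 : Tendsto (fun z : ℝ => (z-1) ^ σ) (𝓝[>] (1:ℝ)) (𝓝 0) := by
    have c : ContinuousAt (fun x : ℝ => x ^ σ) 0 :=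
      Real.continuousAt_rpow_const 0 σ (Or.inr hσ.le)
    have := c.tendsto.comp hsub
    simpa [Real.zero_rpow hσ.ne', Function.comp_def] using this
  have h3 : Tendsto (fun z : ℝ => eval z p) (𝓝[>] (1:ℝ)) (𝓝 (eval 1 p)) :=
    (p.continuous.tendsto 1).mono_left nhdsWithin_le_nhds
  have := (h1.mul h2).mul h3
  simpa using this

lemma tendsto_rpow_mul_poly (r : ℝ) (p : Polynomial ℝ) (h : r + (p.natDegree : ℝ) < 0) :
    Tendsto (fun z : ℝ => z ^ r * eval z p) atTop (𝓝 0) := by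
  have hcongr : ∀ᶠ z : ℝ in atTop,
      ∑ j ∈ Finset.range (p.natDegree+1), p.coeff j * z ^ (r + (j:ℝ))
        = z ^ r * eval z p := by
    filter_upwards [eventually_gt_atTop (0:ℝ)] with z hz
    rw [eval_eq_sum_range, Finset.mul_sum]
    apply Finset.sum_congr rfl
    intro j hj
    rw [Real.rpow_add hz, Real.rpow_natCast]
    ring
  apply Tendsto.congr' hcongr
  have h0 : (0:ℝ) = ∑ j ∈ Finset.range (p.natDegree+1), (0:ℝ) := by simp
  rw [h0]
  apply tendsto_finset_sum
  intro j hj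
  have hj' : (j:ℝ) ≤ (p.natDegree : ℝ) := by
    exact_mod_cast Nat.lt_succ_iff.1 (Finset.mem_range.1 hj)
  have hneg : 0 < -(r + (j:ℝ)) := by linarith
  have := (tendsto_rpow_neg_atTop hneg).const_mul (p.coeff j)
  simpa using this

lemma tendsto_F_top (p : Polynomial ℝ) (e σ : ℝ) (hσ : 0 < σ)
    (h : e + σ + (p.natDegree:ℝ) < 0) :
    Tendsto (fun z : ℝ => z ^ e * (z-1) ^ σ * eval z p) atTop (𝓝 0) := by
  have base := tendsto_rpow_mul_poly (e+σ) p (by linarith)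
  apply squeeze_zero_norm' _ (by simpa using base.norm)
  filter_upwards [eventually_gt_atTop (1:ℝ)] with z hz
  have hz0 : (0:ℝ) < z := lt_trans one_pos hz
  have hz1 : (0:ℝ) ≤ z - 1 := by linarith
  have hb : (z-1) ^ σ ≤ z ^ σ := Real.rpow_le_rpow hz1 (by linarith) hσ.le
  have hre : z ^ e * z ^ σ = z ^ (e+σ) := (Real.rpow_add hz0 e σ).symm
  rw [norm_mul, norm_mul]
  simp only [Real.norm_eq_abs]
  rw [abs_of_nonneg (Real.rpow_nonneg hz0.le e),
      abs_of_nonneg (Real.rpow_nonneg hz1 σ),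
      abs_of_nonneg (Real.rpow_nonneg hz0.le (e+σ))]
  rw [← hre]
  have hle : z ^ e * (z-1) ^ σ ≤ z ^ e * z ^ σ :=
    mul_le_mul_of_nonneg_left hb (Real.rpow_nonneg hz0.le e)
  exact mul_le_mul_of_nonneg_right hle (abs_nonneg _)

lemma rolle_top_aux {f f' : ℝ → ℝ} {a x₀ : ℝ}
    (hd : ∀ x ∈ Ioi a, HasDerivAt f (f' x) x)
    (ha : Tendsto f (𝓝[>] a) (𝓝 0)) (htop : Tendsto f atTop (𝓝 0))
    (hx₀ : a < x₀) (hpos : 0 < f x₀) : ∃ c ∈ Ioi a, f' c = 0 := by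
  have hA : ∃ a', a' ∈ Ioo a x₀ ∧ f a' < f x₀ := by
    have h1 : ∀ᶠ z in 𝓝[>] a, f z < f x₀ := ha.eventually_lt_const hpos
    have h2 : Ioo a x₀ ∈ 𝓝[>] a := Ioo_mem_nhdsGT_of_mem (by constructor <;> simp [hx₀, le_refl])
    rcases (h1.and (h2 : ∀ᶠ z in 𝓝[>] a, z ∈ Ioo a x₀)).exists with ⟨a', ha1, ha2⟩
    exact ⟨a', ha2, ha1⟩
  have hB : ∃ b', x₀ < b' ∧ f b' < f x₀ := by
    have h1 : ∀ᶠ z in atTop, f z < f x₀ := htop.eventually_lt_const hpos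
    rcases (h1.and (eventually_gt_atTop x₀)).exists with ⟨b', hb1, hb2⟩
    exact ⟨b', hb2, hb1⟩
  obtain ⟨a', ⟨haa', ha'x⟩, hfa'⟩ := hA
  obtain ⟨b', hx₀b', hfb'⟩ := hB
  have hab : a' < b' := lt_trans ha'x hx₀b'
  have hsub : Icc a' b' ⊆ Ioi a := fun x hx => lt_of_lt_of_le haa' hx.1
  have hcont : ContinuousOn f (Icc a' b') := fun x hx =>
    ((hd x (hsub hx)).continuousAt).continuousWithinAt
  obtain ⟨c, hc, hmax⟩ := (isCompact_Icc).exists_isMaxOn ⟨a', by constructor <;> simp [hab.le, le_refl]⟩ hcont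
  have hcx : f x₀ ≤ f c := hmax ⟨ha'x.le, hx₀b'.le⟩
  have hca : a' < c := by
    rcases lt_or_eq_of_le hc.1 with h | h
    · exact h
    · exfalso; rw [← h] at hcx; linarith
  have hcb : c < b' := by
    rcases lt_or_eq_of_le hc.2 with h | h
    · exact h
    · exfalso; rw [h] at hcx; linarith
  have hlm : IsLocalMax f c := hmax.isLocalMax (Icc_mem_nhds hca hcb)
  exact ⟨c, lt_trans haa' hca, hlm.hasDerivAt_eq_zero (hd c (lt_trans haa' hca))⟩

lemma rolle_top {f f' : ℝ → ℝ} {a : ℝ}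
    (hd : ∀ x ∈ Ioi a, HasDerivAt f (f' x) x)
    (ha : Tendsto f (𝓝[>] a) (𝓝 0)) (htop : Tendsto f atTop (𝓝 0)) :
    ∃ c ∈ Ioi a, f' c = 0 := by
  by_cases h : ∀ x ∈ Ioi a, f x = 0
  · refine ⟨a + 1, by simp, ?_⟩
    have hmem : a + 1 ∈ Ioi a := by simp
    have h0 : HasDerivAt f 0 (a+1) := by
      have : f =ᶠ[𝓝 (a+1)] (fun _ => 0) := by
        filter_upwards [Ioi_mem_nhds (show a < a + 1 by linarith)] with x hx
        exact h x hx
      exact (hasDerivAt_const (a+1) (0:ℝ)).congr_of_eventuallyEq this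
    exact ((hd _ hmem).unique h0)
  · push_neg at h
    obtain ⟨x₀, hx₀, hfx₀⟩ := h
    rcases lt_or_gt_of_ne hfx₀ with hneg | hpos
    · have hd' : ∀ x ∈ Ioi a, HasDerivAt (fun y => -f y) (-f' x) x := fun x hx => (hd x hx).neg
      have ha' : Tendsto (fun y => -f y) (𝓝[>] a) (𝓝 0) := by simpa using ha.neg
      have htop' : Tendsto (fun y => -f y) atTop (𝓝 0) := by simpa using htop.neg
      obtain ⟨c, hc, hc0⟩ := rolle_top_aux hd' ha' htop' hx₀ (by simpa using hneg)
      exact ⟨c, hc, by linarith [neg_eq_zero.1 hc0]⟩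
    · exact rolle_top_aux hd ha htop hx₀ hpos

lemma rolle_fin {f f' : ℝ → ℝ}
    (hd : ∀ x ∈ Ioi (1:ℝ), HasDerivAt f (f' x) x)
    (h1 : Tendsto f (𝓝[>] (1:ℝ)) (𝓝 0)) :
    ∀ (m : ℕ) (S : Finset ℝ), S.card = m → (∀ x ∈ S, 1 < x) → (∀ x ∈ S, f x = 0) →
      ∃ T : Finset ℝ, T.card = m ∧ (∀ x ∈ T, 1 < x) ∧ (∀ x ∈ T, f' x = 0) ∧
        ∀ x ∈ T, ∃ y ∈ S, x < y := by
  intro m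
  induction m with
  | zero => intro S _ _ _; exact ⟨∅, by simp, by simp, by simp, by simp⟩
  | succ m ih =>
    intro S hcard hS hz
    have hne : S.Nonempty := Finset.card_pos.1 (by omega)
    set M := S.max' hne with hM
    have hMS : M ∈ S := S.max'_mem hne
    have hM1 : 1 < M := hS M hMS
    set S' := S.erase M with hS'
    have hcard' : S'.card = m := by
      rw [hS', Finset.card_erase_of_mem hMS, hcard]; omega
    obtain ⟨T', hT'card, hT'1, hT'z, hT'lt⟩ := ih S' hcard'
      (fun x hx => hS x (Finset.mem_of_mem_erase hx))
      (fun x hx => hz x (Finset.mem_of_mem_erase hx))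
    have hT'M : ∀ x ∈ T', x < M := by
      intro x hx
      obtain ⟨y, hy, hxy⟩ := hT'lt x hx
      exact lt_of_lt_of_le hxy (S.le_max' y (Finset.mem_of_mem_erase hy))
    rcases S'.eq_empty_or_nonempty with hS'e | hS'ne
    · -- use limit Rolle on (1, M)
      have hfM : Tendsto f (𝓝[<] M) (𝓝 0) := by
        have hca : ContinuousAt f M := (hd M hM1).continuousAt
        rw [← hz M hMS]
        exact hca.tendsto.mono_left nhdsWithin_le_nhds
      obtain ⟨c, hc, hc0⟩ := exists_hasDerivAt_eq_zero' hM1 h1 hfM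
        (fun x hx => hd x hx.1)
      refine ⟨insert c T', ?_, ?_, ?_, ?_⟩
      · rw [Finset.card_insert_of_notMem, hT'card]
        intro hcT'
        have := hT'lt c hcT'
        simp [hS'e] at this
      · intro x hx
        rcases Finset.mem_insert.1 hx with rfl | hx
        · exact hc.1
        · exact hT'1 x hx
      · intro x hx
        rcases Finset.mem_insert.1 hx with rfl | hx
        · exact hc0
        · exact hT'z x hx
      · intro x hx
        rcases Finset.mem_insert.1 hx with rfl | hx
        · exact ⟨M, hMS, hc.2⟩
        · obtain ⟨y, hy, hxy⟩ := hT'lt x hx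
          exact ⟨y, Finset.mem_of_mem_erase hy, hxy⟩
    · -- classic Rolle on [L, M]
      set L := S'.max' hS'ne with hL
      have hLS' : L ∈ S' := S'.max'_mem hS'ne
      have hLM : L < M := by
        have hle := S.le_max' L (Finset.mem_of_mem_erase hLS')
        have hne' := Finset.ne_of_mem_erase hLS'
        exact lt_of_le_of_ne hle hne'
      have hL1 : 1 < L := hS L (Finset.mem_of_mem_erase hLS')
      have hcont : ContinuousOn f (Icc L M) := fun x hx =>
        ((hd x (lt_of_lt_of_le hL1 hx.1)).continuousAt).continuousWithinAt
      have heq : f L = f M := by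
        rw [hz L (Finset.mem_of_mem_erase hLS'), hz M hMS]
      obtain ⟨c, hc, hc0⟩ := exists_hasDerivAt_eq_zero hLM hcont heq
        (fun x hx => hd x (lt_trans hL1 hx.1))
      refine ⟨insert c T', ?_, ?_, ?_, ?_⟩
      · rw [Finset.card_insert_of_notMem, hT'card]
        intro hcT'
        obtain ⟨y, hy, hxy⟩ := hT'lt c hcT'
        have := S'.le_max' y hy
        have : c ≤ L := le_trans hxy.le this
        linarith [hc.1]
      · intro x hx
        rcases Finset.mem_insert.1 hx with rfl | hx
        · exact lt_trans hL1 hc.1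
        · exact hT'1 x hx
      · intro x hx
        rcases Finset.mem_insert.1 hx with rfl | hx
        · exact hc0
        · exact hT'z x hx
      · intro x hx
        rcases Finset.mem_insert.1 hx with rfl | hx
        · exact ⟨M, hMS, hc.2⟩
        · obtain ⟨y, hy, hxy⟩ := hT'lt x hx
          exact ⟨y, Finset.mem_of_mem_erase hy, hxy⟩

lemma rolle_chain {f f' : ℝ → ℝ}
    (hd : ∀ x ∈ Ioi (1:ℝ), HasDerivAt f (f' x) x)
    (h1 : Tendsto f (𝓝[>] (1:ℝ)) (𝓝 0)) (htop : Tendsto f atTop (𝓝 0))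
    (S : Finset ℝ) (hS : ∀ x ∈ S, 1 < x) (hz : ∀ x ∈ S, f x = 0) :
    ∃ T : Finset ℝ, T.card = S.card + 1 ∧ (∀ x ∈ T, 1 < x) ∧ ∀ x ∈ T, f' x = 0 := by
  obtain ⟨T', hT'card, hT'1, hT'z, hT'lt⟩ := rolle_fin hd h1 S.card S rfl hS hz
  rcases S.eq_empty_or_nonempty with hSe | hSne
  · obtain ⟨c, hc, hc0⟩ := rolle_top hd h1 htop
    refine ⟨{c}, by simp [hSe], by simpa using hc, by simpa using hc0⟩
  · set M := S.max' hSne with hM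
    have hMS : M ∈ S := S.max'_mem hSne
    have hM1 : 1 < M := hS M hMS
    have hd' : ∀ x ∈ Ioi M, HasDerivAt f (f' x) x := fun x hx => hd x (lt_trans hM1 hx)
    have haM : Tendsto f (𝓝[>] M) (𝓝 0) := by
      have hca : ContinuousAt f M := (hd M hM1).continuousAt
      rw [← hz M hMS]
      exact hca.tendsto.mono_left nhdsWithin_le_nhds
    obtain ⟨c, hc, hc0⟩ := rolle_top hd' haM htop
    have hcT' : c ∉ T' := by
      intro hcT'
      obtain ⟨y, hy, hxy⟩ := hT'lt c hcT'
      have := S.le_max' y hy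
      have : c < M := lt_of_lt_of_le hxy this
      exact absurd hc (not_lt.2 this.le)
    refine ⟨insert c T', ?_, ?_, ?_⟩
    · rw [Finset.card_insert_of_notMem hcT', hT'card]
    · intro x hx
      rcases Finset.mem_insert.1 hx with rfl | hx
      · exact lt_trans hM1 hc
      · exact hT'1 x hx
    · intro x hx
      rcases Finset.mem_insert.1 hx with rfl | hx
      · exact hc0
      · exact hT'z x hx

lemma hypPoly_natDegree_le (k : ℕ) (β γ : ℝ) : (hypPoly k β γ).natDegree ≤ k := by
  rw [Polynomial.natDegree_le_iff_coeff_eq_zero]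
  intro N hN
  rw [hypPoly_coeff, poch_neg_nat_eq_zero hN, zero_mul, zero_div]

/-- For `b < 1 - n` and `d < b + 1 - n` (with `d` not a nonpositive integer), the
polynomial `₂F₁(-n, b; d; z)` has exactly `n` zeros, all real, simple, and lying in
`(1, ∞)`: viewed over `ℂ`, its multiset of roots is exactly the image of a set of `n`
distinct reals in `(1, ∞)`. -/
theorem hyp_zeros_in_Ioi_one (n : ℕ) (hn : 0 < n) (b d : ℝ)
    (hb : b < 1 - n) (hd : d < b + 1 - n) (hdz : ∀ k : ℕ, d ≠ -(k : ℝ)) :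
    ∃ S : Finset ℝ, S.card = n ∧ (∀ x ∈ S, x ∈ Set.Ioi (1 : ℝ)) ∧
      ((hypPoly n b d).map (algebraMap ℝ ℂ)).roots = S.val.map (fun x => (x : ℂ)) := by
  have hn1 : (1:ℝ) ≤ (n:ℝ) := by exact_mod_cast hn
  have hb0 : b < 0 := by linarith
  have hd0 : d < 0 := by linarith
  -- main induction
  have main : ∀ k, k ≤ n → ∃ S : Finset ℝ, S.card = k ∧ (∀ x ∈ S, 1 < x) ∧
      ∀ x ∈ S, eval x (hypPoly k (b + (n:ℝ) - (k:ℕ)) (d + (n:ℝ) - (k:ℕ))) = 0 := by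
    intro k
    induction k with
    | zero => exact fun _ => ⟨∅, by simp, by simp, by simp⟩
    | succ k ih =>
      intro hk1
      obtain ⟨S, hScard, hS1, hSz⟩ := ih (by omega)
      set β : ℝ := b + (n:ℝ) - (k:ℕ) with hβ
      set γ : ℝ := d + (n:ℝ) - (k:ℕ) with hγdef
      have hkn : (k:ℝ) + 1 ≤ (n:ℝ) := by exact_mod_cast hk1
      have hγ : ∀ i : ℕ, γ - 1 + i ≠ 0 := by
        intro i
        have e : γ - 1 + i = d + ((n - (k+1) + i : ℕ) : ℝ) := by
          rw [Nat.cast_add, Nat.cast_sub hk1]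
          push_cast
          rw [hγdef]
          ring
        rw [e]
        intro h
        exact hdz (n - (k+1) + i) (by linarith)
      have hγ1 : γ - 1 ≠ 0 := by simpa using hγ 0
      have hQ : hypPoly (k+1) (β - 1) (γ - 1)
          = hypPoly (k+1) (b + (n:ℝ) - ((k+1:ℕ):ℝ)) (d + (n:ℝ) - ((k+1:ℕ):ℝ)) := by
        congr 1 <;> push_cast <;> ring
      set f : ℝ → ℝ := fun z => z ^ (γ-1) * (z-1) ^ (β - γ - (k:ℝ)) * eval z (hypPoly k β γ) with hf
      set f' : ℝ → ℝ := fun z =>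
        -(γ-1) * (z ^ (γ-2) * (z-1) ^ (β - γ - (k:ℝ) - 1) * eval z (hypPoly (k+1) (β-1) (γ-1))) with hf'
      have hderiv : ∀ z ∈ Set.Ioi (1:ℝ), HasDerivAt f (f' z) z := fun z hz =>
        hasDeriv_F k β γ hγ (γ-1) (γ-2) (β - γ - (k:ℝ)) (β - γ - (k:ℝ) - 1) rfl (by ring) rfl rfl hz
      have hσ : 0 < β - γ - (k:ℝ) := by
        rw [hβ, hγdef]; linarith
      have hone : Tendsto f (𝓝[>] (1:ℝ)) (𝓝 0) := tendsto_F_one _ _ _ hσ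
      have htop : Tendsto f atTop (𝓝 0) := by
        apply tendsto_F_top _ _ _ hσ
        have hdeg : ((hypPoly k β γ).natDegree : ℝ) ≤ (k:ℝ) := by
          exact_mod_cast hypPoly_natDegree_le k β γ
        rw [hβ, hγdef] at *
        linarith
      have hzf : ∀ x ∈ S, f x = 0 := by
        intro x hx
        rw [hf]
        simp only [hSz x hx, mul_zero]
      obtain ⟨T, hTcard, hT1, hTz⟩ := rolle_chain hderiv hone htop S hS1 hzf
      refine ⟨T, by rw [hTcard, hScard], hT1, ?_⟩
      intro x hx
      have hx1 : 1 < x := hT1 x hx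
      have hx0 : (0:ℝ) < x := lt_trans one_pos hx1
      have hx1' : (0:ℝ) < x - 1 := by linarith
      have h0 := hTz x hx
      rw [hf'] at h0
      have hne1 : x ^ (γ-2) ≠ 0 := (Real.rpow_pos_of_pos hx0 _).ne'
      have hne2 : (x-1) ^ (β - γ - (k:ℝ) - 1) ≠ 0 := (Real.rpow_pos_of_pos hx1' _).ne'
      have heval : eval x (hypPoly (k+1) (β-1) (γ-1)) = 0 := by
        simp only [mul_eq_zero, neg_eq_zero] at h0
        tauto
      rw [hQ] at heval
      exact heval
  obtain ⟨S, hScard, hS1, hSz⟩ := main n le_rfl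
  have hpoly : hypPoly n (b + (n:ℝ) - (n:ℕ)) (d + (n:ℝ) - (n:ℕ)) = hypPoly n b d := by
    congr 1 <;> ring
  rw [hpoly] at hSz
  -- degree facts
  have hcn : (hypPoly n b d).coeff n ≠ 0 := by
    rw [hypPoly_coeff]
    apply div_ne_zero
    · apply mul_ne_zero
      · apply poch_ne_zero
        intro i hi h
        have : (i:ℝ) = (n:ℝ) := by linarith
        have : i = n := by exact_mod_cast this
        omega
      · apply poch_ne_zero
        intro i hi h
        have hi' : (i:ℝ) ≤ (n:ℝ) - 1 := by
          have : (i:ℝ) + 1 ≤ (n:ℝ) := by exact_mod_cast hi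
          linarith
        linarith
    · apply mul_ne_zero
      · apply poch_ne_zero
        intro i _ h
        exact hdz i (by linarith)
      · exact Nat.cast_ne_zero.2 (Nat.factorial_ne_zero n)
  have hp0 : hypPoly n b d ≠ 0 := fun h => hcn (by simp [h])
  have hdeg : (hypPoly n b d).natDegree = n :=
    le_antisymm (hypPoly_natDegree_le n b d) (le_natDegree_of_ne_zero hcn)
  set P := (hypPoly n b d).map (algebraMap ℝ ℂ) with hP
  have hP0 : P ≠ 0 := Polynomial.map_ne_zero hp0
  have hPdeg : P.natDegree = n := by
    rw [hP, natDegree_map_eq_of_injective (algebraMap ℝ ℂ).injective, hdeg]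
  have hrootsle : Multiset.card P.roots ≤ n := hPdeg ▸ P.card_roots'
  have hcoe : (S.val.map (fun x => (x : ℂ))) = Multiset.map (fun x : ℝ => (x:ℂ)) S.val := by
    simp only [Multiset.map_id']
    show Multiset.bind S.val (fun a => {(a:ℂ)}) = _
    rw [Multiset.bind_singleton]
  have hle : Multiset.map (fun x : ℝ => (x:ℂ)) S.val ≤ P.roots := by
    rw [Multiset.le_iff_count]
    intro a
    by_cases ha : a ∈ Multiset.map (fun x : ℝ => (x:ℂ)) S.val
    · obtain ⟨x, hxS, rfl⟩ := Multiset.mem_map.1 ha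
      have h1 : Multiset.count ((x:ℂ)) (Multiset.map (fun x : ℝ => (x:ℂ)) S.val) ≤ 1 :=
        Multiset.nodup_iff_count_le_one.1 (S.nodup.map Complex.ofReal_injective) _
      have hroot : P.IsRoot (x:ℂ) := by
        show P.eval (x:ℂ) = 0
        have : ((x:ℝ):ℂ) = algebraMap ℝ ℂ x := rfl
        rw [this, hP, eval_map, eval₂_at_apply, hSz x hxS, map_zero]
      have h2 : 1 ≤ Multiset.count ((x:ℂ)) P.roots := by
        rw [count_roots]
        exact (rootMultiplicity_pos hP0).2 hroot
      omega
    · rw [Multiset.count_eq_zero_of_notMem ha]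
      omega
  have hfinal : P.roots = Multiset.map (fun x : ℝ => (x:ℂ)) S.val := by
    apply (Multiset.eq_of_le_of_card_le hle ?_).symm
    rw [Multiset.card_map]
    rw [show Multiset.card S.val = S.card from rfl, hScard]
    exact hrootsle
  exact ⟨S, hScard, fun x hx => hS1 x hx, by rw [hcoe]; exact hfinal⟩
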